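/- Let S₁ have a bad submatrix corresponding to reactions p₁A+C₁ → p₂B and p₃A+p₄B+C₂ → C₃, i.e., the product complex of the first reaction is exactly p₂B (the column of S₁ with the positive entry of the bad submatrix has only one positive entry). Then applying the sign fixing step to this bad submatrix leaves the deficiency unchanged: δ₂ = δ₁. -/
import Mathlib


open Finset

/-- A chemical reaction network on a species set `σ`: a finite set of
reactions, each a pair (source complex, target complex), complexes being
formal `ℕ`-linear combinations of species. -/
structure CRN (σ : Type) [DecidableEq σ] where
  reactions : Finset ((σ → ℕ) × (σ → ℕ))

variable {σ : Type} [DecidableEq σ] [Fintype σ]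

/-- The set of complexes of a CRN. -/
def CRN.complexes (R : CRN σ) : Finset (σ → ℕ) :=
  R.reactions.image Prod.fst ∪ R.reactions.image Prod.snd

/-- `n`, the number of complexes. -/
def CRN.numComplexes (R : CRN σ) : ℕ := R.complexes.card

/-- The undirected graph on complexes whose edges are the reactions. -/
def CRN.linkGraph (R : CRN σ) : SimpleGraph {c // c ∈ R.complexes} :=
  SimpleGraph.fromRel (fun a b => ((a : σ → ℕ), (b : σ → ℕ)) ∈ R.reactions)

/-- `ℓ`, the number of linkage classes (connected components of the graph on
complexes). -/
noncomputable def CRN.numLinkage (R : CRN σ) : ℕ :=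
  Nat.card (R.linkGraph.ConnectedComponent)

/-- `s`, the rank of the stoichiometric matrix, i.e. the dimension of the span
of the reaction vectors. -/
noncomputable def CRN.srank (R : CRN σ) : ℕ :=
  Module.finrank ℝ (Submodule.span ℝ
    { v : σ → ℝ | ∃ r ∈ R.reactions, v = fun i => (r.2 i : ℝ) - (r.1 i : ℝ) })

/-- The topological deficiency `δ = n - ℓ - s`. -/
noncomputable def CRN.deficiency (R : CRN σ) : ℤ :=
  (R.numComplexes : ℤ) - R.numLinkage - R.srank

/-- The complex `p • A` consisting of `p` copies of the single species `A`. -/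
def mono (A : σ) (p : ℕ) : σ → ℕ := fun i => if i = A then p else 0

/-- Extend a complex by zero at the new species `B' = none`. -/
def extC (y : σ → ℕ) : Option σ → ℕ
  | none => 0
  | some i => y i

/-- The complex `B' + C₂`, where `B' = none` is the new species. -/
def extB' (C₂ : σ → ℕ) : Option σ → ℕ
  | none => 1
  | some i => C₂ i

/-- The complex consisting of the new species `B'` alone. -/
def bPrime : Option σ → ℕ
  | none => 1
  | some _ => 0

/-- One step of the sign fixing algorithm on the CRN level: the reaction
`p₁A + C₁ → p₂B + C₂` is replaced by `p₁A + C₁ → B' + C₂` for a new species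
`B'`, the reaction `B' → p₂B` is added, and all other reactions are kept. -/
def signFixCRN (R : CRN σ) (A B : σ) (p₁ p₂ : ℕ) (C₁ C₂ : σ → ℕ) :
    CRN (Option σ) :=
  ⟨((R.reactions.erase
        ((fun i => mono A p₁ i + C₁ i), (fun i => mono B p₂ i + C₂ i))).image
      (fun r => (extC r.1, extC r.2))) ∪
    {(extC (fun i => mono A p₁ i + C₁ i), extB' C₂), (bPrime, extC (mono B p₂))}⟩

/-! ### Auxiliary lemmas -/

section Aux

variable {σ : Type} [DecidableEq σ] [Fintype σ]

lemma extC_injective : Function.Injective (extC (σ := σ)) := by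
  intro y z h
  funext i
  have := congrFun h (some i)
  simpa [extC] using this

lemma extC_none (y : σ → ℕ) : extC y none = 0 := rfl

lemma bPrime_ne_extC (y : σ → ℕ) : bPrime ≠ extC y := by
  intro h
  have := congrFun h none
  simp [bPrime, extC] at this

lemma extB'_zero : extB' (fun _ => (0 : ℕ) : σ → ℕ) = bPrime := by
  funext o; cases o <;> rfl

/-- The generic "subdivide a reaction" network. -/
def subdiv (R : CRN σ) (y₁ y₂ : σ → ℕ) : CRN (Option σ) :=
  ⟨((R.reactions.erase (y₁, y₂)).image (fun r => (extC r.1, extC r.2))) ∪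
    {(extC y₁, bPrime), (bPrime, extC y₂)}⟩

variable (R : CRN σ) (y₁ y₂ : σ → ℕ)

lemma mem_subdiv_reactions {r : (Option σ → ℕ) × (Option σ → ℕ)} :
    r ∈ (subdiv R y₁ y₂).reactions ↔
      (∃ q ∈ R.reactions.erase (y₁, y₂), r = (extC q.1, extC q.2)) ∨
        r = (extC y₁, bPrime) ∨ r = (bPrime, extC y₂) := by
  simp only [subdiv, Finset.mem_union, Finset.mem_image, Finset.mem_insert,
    Finset.mem_singleton]
  constructor
  · rintro (⟨q, hq, rfl⟩ | h | h)
    · exact Or.inl ⟨q, hq, rfl⟩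
    · exact Or.inr (Or.inl h)
    · exact Or.inr (Or.inr h)
  · rintro (⟨q, hq, rfl⟩ | h | h)
    · exact Or.inl ⟨q, hq, rfl⟩
    · exact Or.inr (Or.inl h)
    · exact Or.inr (Or.inr h)

lemma subdiv_complexes (hy : (y₁, y₂) ∈ R.reactions) :
    (subdiv R y₁ y₂).complexes = insert bPrime (R.complexes.image extC) := by
  have hy₁ : y₁ ∈ R.complexes :=
    Finset.mem_union_left _ (Finset.mem_image_of_mem Prod.fst hy)
  have hy₂ : y₂ ∈ R.complexes :=
    Finset.mem_union_right _ (Finset.mem_image_of_mem Prod.snd hy)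
  ext c
  simp only [CRN.complexes, Finset.mem_union, Finset.mem_image, Finset.mem_insert]
  constructor
  · rintro (⟨r, hr, rfl⟩ | ⟨r, hr, rfl⟩) <;>
      rcases (mem_subdiv_reactions R y₁ y₂).1 hr with ⟨q, hq, rfl⟩ | rfl | rfl
    · refine Or.inr ⟨q.1, Or.inl ⟨q, Finset.mem_of_mem_erase hq, rfl⟩, rfl⟩
    · exact Or.inr ⟨y₁, Or.inl ⟨(y₁, y₂), hy, rfl⟩, rfl⟩
    · exact Or.inl rfl
    · refine Or.inr ⟨q.2, Or.inr ⟨q, Finset.mem_of_mem_erase hq, rfl⟩, rfl⟩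
    · exact Or.inl rfl
    · exact Or.inr ⟨y₂, Or.inr ⟨(y₁, y₂), hy, rfl⟩, rfl⟩
  · rintro (rfl | ⟨x, hx, rfl⟩)
    · exact Or.inr ⟨(extC y₁, bPrime), (mem_subdiv_reactions R y₁ y₂).2
        (Or.inr (Or.inl rfl)), rfl⟩
    · rcases hx with ⟨r, hr, rfl⟩ | ⟨r, hr, rfl⟩
      · by_cases h : r = (y₁, y₂)
        · subst h
          exact Or.inl ⟨(extC y₁, bPrime),
            (mem_subdiv_reactions R y₁ y₂).2 (Or.inr (Or.inl rfl)), rfl⟩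
        · exact Or.inl ⟨(extC r.1, extC r.2), (mem_subdiv_reactions R y₁ y₂).2
            (Or.inl ⟨r, Finset.mem_erase_of_ne_of_mem h hr, rfl⟩), rfl⟩
      · by_cases h : r = (y₁, y₂)
        · subst h
          exact Or.inr ⟨(bPrime, extC y₂),
            (mem_subdiv_reactions R y₁ y₂).2 (Or.inr (Or.inr rfl)), rfl⟩
        · exact Or.inr ⟨(extC r.1, extC r.2), (mem_subdiv_reactions R y₁ y₂).2
            (Or.inl ⟨r, Finset.mem_erase_of_ne_of_mem h hr, rfl⟩), rfl⟩

lemma subdiv_numComplexes (hy : (y₁, y₂) ∈ R.reactions) :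
    (subdiv R y₁ y₂).numComplexes = R.numComplexes + 1 := by
  rw [CRN.numComplexes, subdiv_complexes R y₁ y₂ hy,
    Finset.card_insert_of_notMem (by
      simp only [Finset.mem_image, not_exists, not_and]
      intro x _ h
      exact bPrime_ne_extC x h.symm),
    Finset.card_image_of_injective _ extC_injective]
  rfl

end Aux

section Linkage

variable {σ : Type} [DecidableEq σ] [Fintype σ]
variable (R : CRN σ) (y₁ y₂ : σ → ℕ) (hy : (y₁, y₂) ∈ R.reactions) (hne : y₁ ≠ y₂)

/-- Restriction map on complexes, sending `bPrime`-like complexes to `y₁`. -/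
def resC (y₁ : σ → ℕ) (c : Option σ → ℕ) : σ → ℕ :=
  if c none = 0 then (fun i => c (some i)) else y₁

lemma resC_extC (x : σ → ℕ) : resC y₁ (extC x) = x := by
  funext i; simp [resC, extC]

lemma resC_bPrime : resC y₁ (bPrime (σ := σ)) = y₁ := by
  simp [resC, bPrime]

include hy in
lemma resC_mem {c : Option σ → ℕ} (hc : c ∈ (subdiv R y₁ y₂).complexes) :
    resC y₁ c ∈ R.complexes := by
  rw [subdiv_complexes R y₁ y₂ hy] at hc
  rcases Finset.mem_insert.1 hc with rfl | hc
  · rw [resC_bPrime]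
    exact Finset.mem_union_left _ (Finset.mem_image_of_mem Prod.fst hy)
  · obtain ⟨x, hx, rfl⟩ := Finset.mem_image.1 hc
    rwa [resC_extC]

include hy in
lemma extC_mem {x : σ → ℕ} (hx : x ∈ R.complexes) :
    extC x ∈ (subdiv R y₁ y₂).complexes := by
  rw [subdiv_complexes R y₁ y₂ hy]
  exact Finset.mem_insert_of_mem (Finset.mem_image_of_mem _ hx)

include hy in
lemma bPrime_mem : (bPrime : Option σ → ℕ) ∈ (subdiv R y₁ y₂).complexes := by
  rw [subdiv_complexes R y₁ y₂ hy]
  exact Finset.mem_insert_self _ _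

include hy in
/-- Adjacency (in either direction as a reaction) gives reachability. -/
lemma reach_of_reaction {a b : σ → ℕ} (ha : a ∈ R.complexes) (hb : b ∈ R.complexes)
    (hr : (a, b) ∈ R.reactions) :
    (subdiv R y₁ y₂).linkGraph.Reachable
      ⟨extC a, extC_mem R y₁ y₂ hy ha⟩ ⟨extC b, extC_mem R y₁ y₂ hy hb⟩ := by
  by_cases hab : a = b
  · subst hab; exact SimpleGraph.Reachable.refl _
  by_cases h : (a, b) = (y₁, y₂)
  · have ha' : a = y₁ := congrArg Prod.fst h
    have hb' : b = y₂ := congrArg Prod.snd h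
    have h1 : (subdiv R y₁ y₂).linkGraph.Adj ⟨extC a, extC_mem R y₁ y₂ hy ha⟩
        ⟨bPrime, bPrime_mem R y₁ y₂ hy⟩ := by
      rw [CRN.linkGraph, SimpleGraph.fromRel_adj]
      refine ⟨fun hc => bPrime_ne_extC a (congrArg Subtype.val hc).symm, Or.inl ?_⟩
      have hmem : ((extC a, bPrime) : (Option σ → ℕ) × (Option σ → ℕ)) =
          (extC y₁, bPrime) := by rw [ha']
      exact (mem_subdiv_reactions R y₁ y₂).2 (Or.inr (Or.inl hmem))
    have h2 : (subdiv R y₁ y₂).linkGraph.Adj ⟨bPrime, bPrime_mem R y₁ y₂ hy⟩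
        ⟨extC b, extC_mem R y₁ y₂ hy hb⟩ := by
      rw [CRN.linkGraph, SimpleGraph.fromRel_adj]
      refine ⟨fun hc => bPrime_ne_extC b (congrArg Subtype.val hc), Or.inl ?_⟩
      have hmem : ((bPrime, extC b) : (Option σ → ℕ) × (Option σ → ℕ)) =
          (bPrime, extC y₂) := by rw [hb']
      exact (mem_subdiv_reactions R y₁ y₂).2 (Or.inr (Or.inr hmem))
    exact h1.reachable.trans h2.reachable
  · refine SimpleGraph.Adj.reachable ?_
    rw [CRN.linkGraph, SimpleGraph.fromRel_adj]
    refine ⟨fun hc => hab (extC_injective (congrArg Subtype.val hc)), Or.inl ?_⟩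
    exact (mem_subdiv_reactions R y₁ y₂).2
      (Or.inl ⟨(a, b), Finset.mem_erase_of_ne_of_mem h hr, rfl⟩)

lemma reach_congr {V : Type*} {G : SimpleGraph V} {a b c d : V}
    (h1 : a = c) (h2 : b = d) (h : G.Reachable c d) : G.Reachable a b := by
  subst h1; subst h2; exact h

include hy hne in
lemma reach_res {u v : {c // c ∈ (subdiv R y₁ y₂).complexes}}
    (h : (subdiv R y₁ y₂).linkGraph.Adj u v) :
    R.linkGraph.Reachable ⟨resC y₁ u, resC_mem R y₁ y₂ hy u.2⟩
      ⟨resC y₁ v, resC_mem R y₁ y₂ hy v.2⟩ := by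
  have hy₁ : y₁ ∈ R.complexes :=
    Finset.mem_union_left _ (Finset.mem_image_of_mem Prod.fst hy)
  have hy₂ : y₂ ∈ R.complexes :=
    Finset.mem_union_right _ (Finset.mem_image_of_mem Prod.snd hy)
  rw [CRN.linkGraph, SimpleGraph.fromRel_adj] at h
  obtain ⟨-, h⟩ := h
  have key : ∀ (a b : {c // c ∈ (subdiv R y₁ y₂).complexes}),
      ((a : Option σ → ℕ), (b : Option σ → ℕ)) ∈ (subdiv R y₁ y₂).reactions →
      R.linkGraph.Reachable ⟨resC y₁ a, resC_mem R y₁ y₂ hy a.2⟩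
        ⟨resC y₁ b, resC_mem R y₁ y₂ hy b.2⟩ := by
    intro a b hab
    rcases (mem_subdiv_reactions R y₁ y₂).1 hab with ⟨q, hq, heq⟩ | heq | heq
    · have ha : (a : Option σ → ℕ) = extC q.1 := congrArg Prod.fst heq
      have hb : (b : Option σ → ℕ) = extC q.2 := congrArg Prod.snd heq
      have hq1 : q.1 ∈ R.complexes := Finset.mem_union_left _
        (Finset.mem_image_of_mem Prod.fst (Finset.mem_of_mem_erase hq))
      have hq2 : q.2 ∈ R.complexes := Finset.mem_union_right _
        (Finset.mem_image_of_mem Prod.snd (Finset.mem_of_mem_erase hq))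
      refine reach_congr (c := ⟨q.1, hq1⟩) (d := ⟨q.2, hq2⟩)
        (Subtype.ext (show resC y₁ (a : Option σ → ℕ) = q.1 by rw [ha, resC_extC]))
        (Subtype.ext (show resC y₁ (b : Option σ → ℕ) = q.2 by rw [hb, resC_extC])) ?_
      by_cases hqq : q.1 = q.2
      · exact reach_congr rfl (Subtype.ext hqq.symm) (SimpleGraph.Reachable.refl _)
      · refine SimpleGraph.Adj.reachable ?_
        rw [CRN.linkGraph, SimpleGraph.fromRel_adj]
        exact ⟨fun hc => hqq (congrArg Subtype.val hc),
          Or.inl (Finset.mem_of_mem_erase hq)⟩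
    · have ha : (a : Option σ → ℕ) = extC y₁ := congrArg Prod.fst heq
      have hb : (b : Option σ → ℕ) = bPrime := congrArg Prod.snd heq
      exact reach_congr (c := ⟨y₁, hy₁⟩) (d := ⟨y₁, hy₁⟩)
        (Subtype.ext (show resC y₁ (a : Option σ → ℕ) = y₁ by rw [ha, resC_extC]))
        (Subtype.ext (show resC y₁ (b : Option σ → ℕ) = y₁ by rw [hb, resC_bPrime]))
        (SimpleGraph.Reachable.refl _)
    · have ha : (a : Option σ → ℕ) = bPrime := congrArg Prod.fst heq
      have hb : (b : Option σ → ℕ) = extC y₂ := congrArg Prod.snd heq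
      refine reach_congr (c := ⟨y₁, hy₁⟩) (d := ⟨y₂, hy₂⟩)
        (Subtype.ext (show resC y₁ (a : Option σ → ℕ) = y₁ by rw [ha, resC_bPrime]))
        (Subtype.ext (show resC y₁ (b : Option σ → ℕ) = y₂ by rw [hb, resC_extC])) ?_
      refine SimpleGraph.Adj.reachable ?_
      rw [CRN.linkGraph, SimpleGraph.fromRel_adj]
      exact ⟨fun hc => hne (congrArg Subtype.val hc), Or.inl hy⟩
  rcases h with h | h
  · exact key u v h
  · exact (key v u h).symm

include hy hne in
lemma subdiv_numLinkage : (subdiv R y₁ y₂).numLinkage = R.numLinkage := by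
  classical
  -- map on components, from subdiv graph to original graph
  have hwalk : ∀ (f : {c // c ∈ (subdiv R y₁ y₂).complexes} → R.linkGraph.ConnectedComponent)
      (hf : ∀ u v, (subdiv R y₁ y₂).linkGraph.Adj u v → f u = f v)
      (u v : {c // c ∈ (subdiv R y₁ y₂).complexes})
      (p : (subdiv R y₁ y₂).linkGraph.Walk u v), f u = f v := by
    intro f hf u v p
    induction p with
    | nil => rfl
    | cons a p ih => exact (hf _ _ a).trans ih
  have hwalk' : ∀ (g : {c // c ∈ R.complexes} → (subdiv R y₁ y₂).linkGraph.ConnectedComponent)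
      (hg : ∀ u v, R.linkGraph.Adj u v → g u = g v)
      (u v : {c // c ∈ R.complexes})
      (p : R.linkGraph.Walk u v), g u = g v := by
    intro g hg u v p
    induction p with
    | nil => rfl
    | cons a p ih => exact (hg _ _ a).trans ih
  set f : {c // c ∈ (subdiv R y₁ y₂).complexes} → R.linkGraph.ConnectedComponent :=
    fun u => R.linkGraph.connectedComponentMk ⟨resC y₁ u, resC_mem R y₁ y₂ hy u.2⟩ with hfdef
  set g : {c // c ∈ R.complexes} → (subdiv R y₁ y₂).linkGraph.ConnectedComponent :=
    fun x => (subdiv R y₁ y₂).linkGraph.connectedComponentMk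
      ⟨extC x, extC_mem R y₁ y₂ hy x.2⟩ with hgdef
  have hfadj : ∀ u v, (subdiv R y₁ y₂).linkGraph.Adj u v → f u = f v := by
    intro u v h
    exact SimpleGraph.ConnectedComponent.sound (reach_res R y₁ y₂ hy hne h)
  have hgadj : ∀ u v, R.linkGraph.Adj u v → g u = g v := by
    intro u v h
    rw [CRN.linkGraph, SimpleGraph.fromRel_adj] at h
    obtain ⟨-, h | h⟩ := h
    · exact SimpleGraph.ConnectedComponent.sound (reach_of_reaction R y₁ y₂ hy u.2 v.2 h)
    · exact (SimpleGraph.ConnectedComponent.sound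
        (reach_of_reaction R y₁ y₂ hy v.2 u.2 h)).symm
  let F : (subdiv R y₁ y₂).linkGraph.ConnectedComponent → R.linkGraph.ConnectedComponent :=
    SimpleGraph.ConnectedComponent.lift f (fun u v p _ => hwalk f hfadj u v p)
  let G : R.linkGraph.ConnectedComponent → (subdiv R y₁ y₂).linkGraph.ConnectedComponent :=
    SimpleGraph.ConnectedComponent.lift g (fun u v p _ => hwalk' g hgadj u v p)
  have hFG : ∀ c, F (G c) = c := by
    refine SimpleGraph.ConnectedComponent.ind ?_
    intro x
    show R.linkGraph.connectedComponentMk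
      ⟨resC y₁ (extC (x : σ → ℕ)), _⟩ = R.linkGraph.connectedComponentMk x
    exact congrArg _ (Subtype.ext (resC_extC y₁ x))
  have hGF : ∀ c, G (F c) = c := by
    refine SimpleGraph.ConnectedComponent.ind ?_
    intro u
    show (subdiv R y₁ y₂).linkGraph.connectedComponentMk
      ⟨extC (resC y₁ (u : Option σ → ℕ)), _⟩ =
      (subdiv R y₁ y₂).linkGraph.connectedComponentMk u
    apply SimpleGraph.ConnectedComponent.sound
    by_cases h0 : (u : Option σ → ℕ) none = 0
    · have : extC (resC y₁ (u : Option σ → ℕ)) = (u : Option σ → ℕ) := by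
        funext o
        cases o with
        | none => simp [extC, h0]
        | some i => simp [extC, resC, h0]
      exact reach_congr (Subtype.ext this) rfl (SimpleGraph.Reachable.refl _)
    · -- u must be bPrime
      have hu : (u : Option σ → ℕ) = bPrime := by
        have h2 : (u : Option σ → ℕ) ∈ insert bPrime (R.complexes.image extC) := by
          rw [← subdiv_complexes R y₁ y₂ hy]; exact u.2
        rcases Finset.mem_insert.1 h2 with h | h
        · exact h
        · obtain ⟨x, -, hx⟩ := Finset.mem_image.1 h
          exact absurd (show (u : Option σ → ℕ) none = 0 by rw [← hx]; rfl) h0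
      have hres : resC y₁ (u : Option σ → ℕ) = y₁ := by rw [hu, resC_bPrime]
      refine reach_congr (c := ⟨extC y₁, extC_mem R y₁ y₂ hy
        (Finset.mem_union_left _ (Finset.mem_image_of_mem Prod.fst hy))⟩)
        (d := ⟨bPrime, bPrime_mem R y₁ y₂ hy⟩)
        (Subtype.ext (show extC (resC y₁ (u : Option σ → ℕ)) = extC y₁ by rw [hres]))
        (Subtype.ext hu) ?_
      refine SimpleGraph.Adj.reachable ?_
      rw [CRN.linkGraph, SimpleGraph.fromRel_adj]
      refine ⟨fun hc => bPrime_ne_extC y₁ (congrArg Subtype.val hc).symm, Or.inl ?_⟩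
      exact (mem_subdiv_reactions R y₁ y₂).2 (Or.inr (Or.inl rfl))
  rw [CRN.numLinkage, CRN.numLinkage]
  exact Nat.card_congr ⟨F, G, fun c => hGF c, fun c => hFG c⟩

end Linkage

section Rank

variable {σ : Type} [DecidableEq σ] [Fintype σ]

/-- Extension by zero as a linear map. -/
noncomputable def ExtL : (σ → ℝ) →ₗ[ℝ] (Option σ → ℝ) where
  toFun v := fun o => o.elim 0 v
  map_add' := by intro x y; funext o; cases o <;> simp
  map_smul' := by intro c x; funext o; cases o <;> simp

lemma ExtL_apply (v : σ → ℝ) (o : Option σ) : ExtL v o = o.elim 0 v := rfl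

lemma ExtL_injective : Function.Injective (ExtL (σ := σ)) := by
  intro x y h
  funext i
  exact congrFun h (some i)

/-- The reaction vector of the new reaction `p₁A + C₁ → B'`. -/
noncomputable def wVec (y₁ : σ → ℕ) : Option σ → ℝ :=
  fun o => ((bPrime o : ℕ) : ℝ) - ((extC y₁ o : ℕ) : ℝ)

lemma extVec (a b : σ → ℕ) :
    (fun o => ((extC b o : ℕ) : ℝ) - ((extC a o : ℕ) : ℝ)) =
      ExtL (fun i => ((b i : ℕ) : ℝ) - ((a i : ℕ) : ℝ)) := by
  funext o
  cases o with
  | none => simp [extC, ExtL_apply]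
  | some i => simp [extC, ExtL_apply]

lemma secondVec (y₁ y₂ : σ → ℕ) :
    (fun o => ((extC y₂ o : ℕ) : ℝ) - ((bPrime o : ℕ) : ℝ)) =
      ExtL (fun i => ((y₂ i : ℕ) : ℝ) - ((y₁ i : ℕ) : ℝ)) - wVec y₁ := by
  funext o
  cases o with
  | none => simp [extC, bPrime, ExtL_apply, wVec]
  | some i => simp [extC, bPrime, ExtL_apply, wVec]

variable (R : CRN σ) (y₁ y₂ : σ → ℕ) (hy : (y₁, y₂) ∈ R.reactions)

include hy in
lemma subdiv_span :
    Submodule.span ℝ { v : Option σ → ℝ |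
        ∃ r ∈ (subdiv R y₁ y₂).reactions, v = fun o => (r.2 o : ℝ) - (r.1 o : ℝ) } =
      (Submodule.span ℝ { v : σ → ℝ |
          ∃ r ∈ R.reactions, v = fun i => (r.2 i : ℝ) - (r.1 i : ℝ) }).map ExtL ⊔
        Submodule.span ℝ {wVec y₁} := by
  apply le_antisymm
  · rw [Submodule.span_le]
    rintro v ⟨r, hr, rfl⟩
    rcases (mem_subdiv_reactions R y₁ y₂).1 hr with ⟨q, hq, rfl⟩ | rfl | rfl
    · simp only [SetLike.mem_coe]
      rw [extVec]
      exact Submodule.mem_sup_left (Submodule.mem_map_of_mem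
        (Submodule.subset_span ⟨q, Finset.mem_of_mem_erase hq, rfl⟩))
    · simp only [SetLike.mem_coe]
      exact Submodule.mem_sup_right (Submodule.subset_span rfl)
    · simp only [SetLike.mem_coe]
      rw [secondVec y₁ y₂]
      exact sub_mem
        (Submodule.mem_sup_left (Submodule.mem_map_of_mem
          (Submodule.subset_span ⟨(y₁, y₂), hy, rfl⟩)))
        (Submodule.mem_sup_right (Submodule.subset_span rfl))
  · refine sup_le ?_ ?_
    · rw [Submodule.map_le_iff_le_comap, Submodule.span_le]
      rintro u ⟨r, hr, rfl⟩
      simp only [SetLike.mem_coe, Submodule.mem_comap]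
      by_cases h : r = (y₁, y₂)
      · subst h
        have h1 : wVec y₁ ∈ Submodule.span ℝ { v : Option σ → ℝ |
            ∃ r ∈ (subdiv R y₁ y₂).reactions, v = fun o => (r.2 o : ℝ) - (r.1 o : ℝ) } :=
          Submodule.subset_span ⟨(extC y₁, bPrime),
            (mem_subdiv_reactions R y₁ y₂).2 (Or.inr (Or.inl rfl)), rfl⟩
        have h2 : ExtL (fun i => ((y₂ i : ℕ) : ℝ) - ((y₁ i : ℕ) : ℝ)) - wVec y₁ ∈
            Submodule.span ℝ { v : Option σ → ℝ |
            ∃ r ∈ (subdiv R y₁ y₂).reactions, v = fun o => (r.2 o : ℝ) - (r.1 o : ℝ) } := by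
          rw [← secondVec y₁ y₂]
          exact Submodule.subset_span ⟨(bPrime, extC y₂),
            (mem_subdiv_reactions R y₁ y₂).2 (Or.inr (Or.inr rfl)), rfl⟩
        have := add_mem h1 h2
        simpa using this
      · rw [← extVec]
        exact Submodule.subset_span ⟨(extC r.1, extC r.2),
          (mem_subdiv_reactions R y₁ y₂).2
            (Or.inl ⟨r, Finset.mem_erase_of_ne_of_mem h hr, rfl⟩), rfl⟩
    · rw [Submodule.span_le]
      rintro v rfl
      exact Submodule.subset_span ⟨(extC y₁, bPrime),
        (mem_subdiv_reactions R y₁ y₂).2 (Or.inr (Or.inl rfl)), rfl⟩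

lemma wVec_none (y₁ : σ → ℕ) : wVec y₁ none = 1 := by
  simp [wVec, bPrime, extC]

include hy in
lemma subdiv_srank : (subdiv R y₁ y₂).srank = R.srank + 1 := by
  rw [CRN.srank, CRN.srank, subdiv_span R y₁ y₂ hy]
  set T := Submodule.span ℝ { v : σ → ℝ |
      ∃ r ∈ R.reactions, v = fun i => (r.2 i : ℝ) - (r.1 i : ℝ) } with hT
  have hw0 : wVec (σ := σ) y₁ ≠ 0 := by
    intro h
    have := congrFun h none
    rw [wVec_none] at this
    simpa using this
  have hinf : (T.map ExtL) ⊓ Submodule.span ℝ {wVec y₁} = ⊥ := by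
    rw [eq_bot_iff]
    rintro x hx
    obtain ⟨hx1, hx2⟩ := Submodule.mem_inf.1 hx
    obtain ⟨t, -, rfl⟩ := Submodule.mem_map.1 hx1
    obtain ⟨c, hc⟩ := Submodule.mem_span_singleton.1 hx2
    have h0 : ExtL t none = 0 := rfl
    have hc0 : c = 0 := by
      have := congrFun hc none
      simp only [Pi.smul_apply, wVec_none, smul_eq_mul, mul_one] at this
      rw [this, h0]
    rw [← hc, hc0, zero_smul]
    exact Submodule.zero_mem ⊥
  have hadd := Submodule.finrank_sup_add_finrank_inf_eq (T.map ExtL)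
    (Submodule.span ℝ {wVec y₁})
  rw [hinf, finrank_bot, add_zero] at hadd
  rw [hadd, finrank_span_singleton hw0,
    ← LinearEquiv.finrank_eq (Submodule.equivMapOfInjective ExtL ExtL_injective T)]

end Rank


/-- If the product complex of the replaced reaction is exactly `p₂B` (i.e.
`C₂ = ∅`), the sign fixing step leaves the deficiency unchanged: `δ₂ = δ₁`. -/
theorem signFixCRN_deficiency_eq_of_single_product {d : ℕ} (N₁ : CRN (Fin d))
    (A B : Fin d) (hAB : A ≠ B)
    (p₁ p₂ p₃ p₄ : ℕ) (hp₁ : 0 < p₁) (hp₂ : 0 < p₂) (hp₃ : 0 < p₃) (hp₄ : 0 < p₄)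
    (C₁ C₂ C₃ : Fin d → ℕ)
    (hC₁ : C₁ A = 0 ∧ C₁ B = 0) (hC₂ : C₂ A = 0 ∧ C₂ B = 0)
    (hC₃ : C₃ A = 0 ∧ C₃ B = 0)
    (hr₁ : ((fun i => mono A p₁ i + C₁ i), (fun i => mono B p₂ i + (0 : ℕ)))
      ∈ N₁.reactions)
    (hr₂ : ((fun i => mono A p₃ i + mono B p₄ i + C₂ i), C₃) ∈ N₁.reactions) :
    (signFixCRN N₁ A B p₁ p₂ C₁ (fun _ => 0)).deficiency = N₁.deficiency := by
  have hpe : (fun i => mono B p₂ i + (0 : ℕ)) = mono B p₂ := funext fun i => add_zero _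
  rw [hpe] at hr₁
  have hEq : signFixCRN N₁ A B p₁ p₂ C₁ (fun _ => 0) =
      subdiv N₁ (fun i => mono A p₁ i + C₁ i) (mono B p₂) := by
    simp only [signFixCRN, subdiv, extB'_zero,
      show (fun i => mono B p₂ i + (fun _ : Fin d => (0 : ℕ)) i) = mono B p₂ from
        funext fun i => add_zero _]
  have hne : (fun i => mono A p₁ i + C₁ i) ≠ mono B p₂ := by
    intro h
    have := congrFun h A
    simp [mono, hC₁.1, hAB] at this
    omega
  rw [hEq, CRN.deficiency, CRN.deficiency,
    subdiv_numComplexes N₁ _ _ hr₁,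
    subdiv_numLinkage N₁ _ _ hr₁ hne,
    subdiv_srank N₁ _ _ hr₁]
  push_cast
  ring
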